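/- Consider the ODE system a' = −(a² + ¼b²)a, b' = −(a² + (5/4)b²)b with initial data a(0), b(0) ∈ ℝ. Then every solution exists for all t ∈ [0,∞) and (a(t), b(t)) → (0,0) as t → ∞. -/

import Mathlib

open Set Filter

lemma aux_anti {F F' : ℝ → ℝ} (hd : ∀ t ∈ Ici (0:ℝ), HasDerivWithinAt F (F' t) (Ici 0) t)
    (hle : ∀ t ∈ Ici (0:ℝ), F' t ≤ 0) : AntitoneOn F (Ici 0) := by
  apply antitoneOn_of_deriv_nonpos (convex_Ici 0) (fun t ht => (hd t ht).continuousWithinAt)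
  · intro t ht
    rw [interior_Ici] at ht
    exact ((hd t (mem_Ici.mpr ht.le)).hasDerivAt (Ici_mem_nhds ht)).differentiableAt.differentiableWithinAt
  · intro t ht
    rw [interior_Ici] at ht
    rw [((hd t (mem_Ici.mpr ht.le)).hasDerivAt (Ici_mem_nhds ht)).deriv]
    exact hle t (mem_Ici.mpr ht.le)

lemma key_lip (R d x y x' y' c1 c2 : ℝ) (hR : 0 ≤ R) (hd : 0 ≤ d)
    (hx : |x| ≤ R) (hy : |y| ≤ R) (hx' : |x'| ≤ R) (hy' : |y'| ≤ R)
    (h1 : |x - x'| ≤ d) (h2 : |y - y'| ≤ d)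
    (hc1 : 0 ≤ c1) (hc1' : c1 ≤ 2) (hc2 : 0 ≤ c2) (hc2' : c2 ≤ 2) :
    |(c1*x^2 + c2*y^2)*x - (c1*x'^2 + c2*y'^2)*x'| ≤ (13*R^2+1) * d := by
  have e1 : (c1*x^2 + c2*y^2)*x - (c1*x'^2 + c2*y'^2)*x'
      = (c1*(x - x'))*(x^2 + x*x' + x'^2) + (c2*y^2)*(x - x') + (c2*x')*((y - y')*(y + y')) := by
    ring
  have hx2 : x^2 ≤ R^2 := by nlinarith [neg_abs_le x, le_abs_self x]
  have hx'2 : x'^2 ≤ R^2 := by nlinarith [neg_abs_le x', le_abs_self x']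
  have hy2 : y^2 ≤ R^2 := by nlinarith [neg_abs_le y, le_abs_self y]
  have hxx' : |x*x'| ≤ R^2 := by
    rw [abs_mul]
    calc |x| * |x'| ≤ R*R := mul_le_mul hx hx' (abs_nonneg _) hR
    _ = R^2 := by ring
  have hS : |x^2 + x*x' + x'^2| ≤ 3*R^2 := by
    calc |x^2 + x*x' + x'^2| ≤ |x^2 + x*x'| + |x'^2| := abs_add_le _ _
    _ ≤ |x^2| + |x*x'| + |x'^2| := by linarith [abs_add_le (x^2) (x*x')]
    _ ≤ 3*R^2 := by rw [abs_of_nonneg (sq_nonneg x), abs_of_nonneg (sq_nonneg x')]; linarith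
  have hyy' : |y + y'| ≤ 2*R := by
    calc |y + y'| ≤ |y| + |y'| := abs_add_le _ _
    _ ≤ 2*R := by linarith
  have hA : |(c1*(x - x'))*(x^2 + x*x' + x'^2)| ≤ 6*(R^2*d) := by
    rw [abs_mul, abs_mul, abs_of_nonneg hc1]
    calc c1 * |x - x'| * |x^2 + x*x' + x'^2| ≤ (2*d)*(3*R^2) := by
          have h0 : c1 * |x - x'| ≤ 2*d := mul_le_mul hc1' h1 (abs_nonneg _) (by norm_num)
          exact mul_le_mul h0 hS (abs_nonneg _) (by positivity)
    _ = 6*(R^2*d) := by ring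
  have hB : |(c2*y^2)*(x - x')| ≤ 2*(R^2*d) := by
    rw [abs_mul, abs_mul, abs_of_nonneg hc2, abs_of_nonneg (sq_nonneg y)]
    calc c2 * y^2 * |x - x'| ≤ (2*R^2)*d := by
          have h0 : c2 * y^2 ≤ 2*R^2 := mul_le_mul hc2' hy2 (sq_nonneg y) (by norm_num)
          exact mul_le_mul h0 h1 (abs_nonneg _) (by positivity)
    _ = 2*(R^2*d) := by ring
  have hC : |(c2*x')*((y - y')*(y + y'))| ≤ 4*(R^2*d) := by
    rw [abs_mul, abs_mul, abs_mul, abs_of_nonneg hc2]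
    calc c2 * |x'| * (|y - y'| * |y + y'|) ≤ (2*R)*(d*(2*R)) := by
          have h0 : c2 * |x'| ≤ 2*R := mul_le_mul hc2' hx' (abs_nonneg _) (by norm_num)
          have h3 : |y - y'| * |y + y'| ≤ d*(2*R) := mul_le_mul h2 hyy' (abs_nonneg _) hd
          exact mul_le_mul h0 h3 (by positivity) (by positivity)
    _ = 4*(R^2*d) := by ring
  rw [e1]
  have habs : |(c1*(x - x'))*(x^2 + x*x' + x'^2) + (c2*y^2)*(x - x') + (c2*x')*((y - y')*(y + y'))|
      ≤ |(c1*(x - x'))*(x^2 + x*x' + x'^2)| + |(c2*y^2)*(x - x')| + |(c2*x')*((y - y')*(y + y'))| := by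
    refine (abs_add_le _ _).trans ?_
    linarith [abs_add_le ((c1*(x - x'))*(x^2 + x*x' + x'^2)) ((c2*y^2)*(x - x'))]
  nlinarith [habs, hA, hB, hC, mul_nonneg (sq_nonneg R) hd]

lemma part2 (a b : ℝ → ℝ)
    (hab : ∀ t ∈ Ici (0:ℝ),
        HasDerivWithinAt a (-((a t) ^ 2 + (1/4) * (b t) ^ 2) * a t) (Ici 0) t ∧
        HasDerivWithinAt b (-((a t) ^ 2 + (5/4) * (b t) ^ 2) * b t) (Ici 0) t) :
    Tendsto (fun t => (a t, b t)) atTop (nhds ((0:ℝ), (0:ℝ))) := by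
  set E : ℝ → ℝ := fun t => a t ^ 2 + b t ^ 2 with hEdef
  set E' : ℝ → ℝ := fun t =>
    2 * a t ^ 1 * (-((a t) ^ 2 + (1/4) * (b t) ^ 2) * a t)
      + 2 * b t ^ 1 * (-((a t) ^ 2 + (5/4) * (b t) ^ 2) * b t) with hE'def
  have hEnonneg : ∀ t, 0 ≤ E t := fun t => by positivity
  have hE : ∀ t ∈ Ici (0:ℝ), HasDerivWithinAt E (E' t) (Ici 0) t := by
    intro t ht
    have h := ((hab t ht).1.pow 2).add ((hab t ht).2.pow 2)
    exact h.congr_deriv (by norm_num [hE'def])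
  have hE'le : ∀ t ∈ Ici (0:ℝ), E' t ≤ -(E t)^2 := by
    intro t ht
    simp only [hE'def, hEdef]
    nlinarith [sq_nonneg (a t), sq_nonneg (b t), sq_nonneg (a t * b t), sq_nonneg (a t ^ 2), sq_nonneg (b t ^ 2)]
  have hmono : AntitoneOn E (Ici 0) :=
    aux_anti hE (fun t ht => (hE'le t ht).trans (neg_nonpos.mpr (sq_nonneg _)))
  have hEsq : ∀ t, a t ^ 2 ≤ E t ∧ b t ^ 2 ≤ E t := fun t =>
    ⟨by simp only [hEdef]; nlinarith [sq_nonneg (b t)], by simp only [hEdef]; nlinarith [sq_nonneg (a t)]⟩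
  clear_value E E'
  clear hEdef hE'def
  have key : ∀ δ > (0:ℝ), ∃ t₀ ≥ (0:ℝ), E t₀ < δ := by
    intro δ hδ
    by_contra hcon
    push_neg at hcon
    have hpos : ∀ t, 0 < E t + δ := fun t => by have := hEnonneg t; linarith
    have hHd : ∀ t ∈ Ici (0:ℝ),
        HasDerivWithinAt (fun t => t/4 - (E t + δ)⁻¹) (1/4 - (-(E' t)/(E t + δ)^2)) (Ici 0) t := by
      intro t ht
      have h1 : HasDerivWithinAt (fun t => E t + δ) (E' t) (Ici 0) t := (hE t ht).add_const δ
      have h2 := h1.inv (ne_of_gt (hpos t))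
      exact ((hasDerivWithinAt_id t (Ici 0)).div_const 4).sub h2
    have hder : ∀ t ∈ Ici (0:ℝ), 1/4 - (-(E' t)/(E t + δ)^2) ≤ 0 := by
      intro t ht
      have hP : 0 < (E t + δ)^2 := pow_pos (hpos t) 2
      have h1 : E' t ≤ -(E t)^2 := hE'le t ht
      have h2 : δ ≤ E t := hcon t ht
      rw [sub_nonpos, le_div_iff₀ hP]
      nlinarith [mul_nonneg (by linarith : (0:ℝ) ≤ 3*E t + δ) (by linarith : (0:ℝ) ≤ E t - δ)]
    have hanti := aux_anti hHd hder
    have hT : (0:ℝ) ≤ 3/δ := by positivity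
    have h4 := hanti (self_mem_Ici) hT hT
    simp only at h4
    have h5 : (E (3/δ) + δ)⁻¹ ≤ (2*δ)⁻¹ := by
      apply inv_anti₀ (by positivity)
      have := hcon (3/δ) hT; linarith
    have h6 : 0 < (E 0 + δ)⁻¹ := inv_pos.mpr (hpos 0)
    have h7 : (3/δ)/4 ≤ (2*δ)⁻¹ := by linarith
    rw [div_div, div_le_iff₀ (by positivity), inv_eq_one_div, div_mul_eq_mul_div,
      le_div_iff₀ (by positivity)] at h7
    nlinarith
  have hE0 : Tendsto E atTop (nhds 0) := by
    rw [Metric.tendsto_atTop]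
    intro ε hε
    obtain ⟨t₀, ht₀, hlt⟩ := key ε hε
    refine ⟨t₀, fun t ht => ?_⟩
    have h1 : E t ≤ E t₀ := hmono ht₀ (ht₀.trans ht) ht
    rw [Real.dist_eq, sub_zero, abs_of_nonneg (hEnonneg t)]
    linarith
  have hsq : Tendsto (fun t => Real.sqrt (E t)) atTop (nhds 0) := by
    have h := (Real.continuous_sqrt.tendsto 0).comp hE0
    simpa [Function.comp_def] using h
  have ha0 : Tendsto a atTop (nhds 0) := by
    apply squeeze_zero_norm (fun t => ?_) hsq
    rw [Real.norm_eq_abs, ← Real.sqrt_sq_eq_abs]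
    exact Real.sqrt_le_sqrt (hEsq t).1
  have hb0 : Tendsto b atTop (nhds 0) := by
    apply squeeze_zero_norm (fun t => ?_) hsq
    rw [Real.norm_eq_abs, ← Real.sqrt_sq_eq_abs]
    exact Real.sqrt_le_sqrt (hEsq t).2
  exact ha0.prodMk_nhds hb0

lemma part1 (a₀ b₀ : ℝ) :
    ∃ a b : ℝ → ℝ, a 0 = a₀ ∧ b 0 = b₀ ∧
      ∀ t ∈ Ici (0 : ℝ),
        HasDerivWithinAt a (-((a t) ^ 2 + (1/4) * (b t) ^ 2) * a t) (Ici 0) t ∧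
        HasDerivWithinAt b (-((a t) ^ 2 + (5/4) * (b t) ^ 2) * b t) (Ici 0) t := by
  set R : ℝ := Real.sqrt (a₀^2 + b₀^2) with hRdef
  have hR : 0 ≤ R := Real.sqrt_nonneg _
  have hR2 : R^2 = a₀^2 + b₀^2 := Real.sq_sqrt (by positivity)
  set cl : ℝ → ℝ := fun s => max (min s R) (-R) with hcl
  have hclabs : ∀ s, |cl s| ≤ R := by
    intro s
    rw [abs_le]
    exact ⟨le_max_right _ _, max_le ((min_le_right s R)) (by linarith)⟩
  have hcleq : ∀ s, |s| ≤ R → cl s = s := by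
    intro s hs
    rw [abs_le] at hs
    simp only [hcl]
    rw [min_eq_left hs.2, max_eq_left hs.1]
  have hclmul : ∀ s, 0 ≤ s * cl s := by
    intro s
    rcases le_or_gt 0 s with h | h
    · exact mul_nonneg h (le_max_of_le_left (le_min h hR))
    · have h1 : cl s ≤ 0 := max_le ((min_le_left s R).trans h.le) (by linarith)
      nlinarith
  have hcllip : LipschitzWith 1 cl := (LipschitzWith.id.min_const R).max_const (-R)
  have hcldist : ∀ s u : ℝ, |cl s - cl u| ≤ |s - u| := by
    intro s u
    have := hcllip.dist_le_mul s u
    simpa [Real.dist_eq] using this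
  set G : ℝ × ℝ → ℝ × ℝ := fun p =>
    (-(cl p.1^2 + (1/4) * cl p.2^2) * cl p.1, -(cl p.1^2 + (5/4) * cl p.2^2) * cl p.2) with hG
  set K : NNReal := ⟨13*R^2+1, by positivity⟩ with hK
  have hGlip : LipschitzWith K G := by
    apply LipschitzWith.of_dist_le_mul
    intro p q
    rw [Prod.dist_eq]
    have hd1 : dist p.1 q.1 ≤ dist p q := by rw [Prod.dist_eq]; exact le_max_left _ _
    have hd2 : dist p.2 q.2 ≤ dist p q := by rw [Prod.dist_eq]; exact le_max_right _ _
    rw [Real.dist_eq] at hd1 hd2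
    have hdnn : (0:ℝ) ≤ dist p q := dist_nonneg
    have hKd : (K : ℝ) = 13*R^2+1 := rfl
    apply max_le
    · rw [Real.dist_eq]
      have e : -(cl p.1^2 + (1/4) * cl p.2^2) * cl p.1 - -(cl q.1^2 + (1/4) * cl q.2^2) * cl q.1
          = -(((1:ℝ)*(cl p.1)^2 + (1/4)*(cl p.2)^2)*(cl p.1) - ((1:ℝ)*(cl q.1)^2 + (1/4)*(cl q.2)^2)*(cl q.1)) := by
        ring
      rw [hKd, e, abs_neg]
      exact key_lip R (dist p q) (cl p.1) (cl p.2) (cl q.1) (cl q.2) 1 (1/4) hR hdnn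
        (hclabs _) (hclabs _) (hclabs _) (hclabs _)
        ((hcldist _ _).trans hd1) ((hcldist _ _).trans hd2)
        (by norm_num) (by norm_num) (by norm_num) (by norm_num)
    · rw [Real.dist_eq]
      have e : -(cl p.1^2 + (5/4) * cl p.2^2) * cl p.2 - -(cl q.1^2 + (5/4) * cl q.2^2) * cl q.2
          = -((((5:ℝ)/4)*(cl p.2)^2 + (1:ℝ)*(cl p.1)^2)*(cl p.2) - (((5:ℝ)/4)*(cl q.2)^2 + (1:ℝ)*(cl q.1)^2)*(cl q.2)) := by
        ring
      rw [hKd, e, abs_neg]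
      exact key_lip R (dist p q) (cl p.2) (cl p.1) (cl q.2) (cl q.1) (5/4) 1 hR hdnn
        (hclabs _) (hclabs _) (hclabs _) (hclabs _)
        ((hcldist _ _).trans hd2) ((hcldist _ _).trans hd1)
        (by norm_num) (by norm_num) (by norm_num) (by norm_num)
  have hGbound : ∀ p, ‖G p‖ ≤ 3*R^3 := by
    intro p
    have b1 : ∀ (c1 c2 u v : ℝ), 0 ≤ c1 → c1 ≤ 5/4 → 0 ≤ c2 → c2 ≤ 5/4 → |u| ≤ R → |v| ≤ R →
        |-(c1*u^2 + c2*v^2) * u| ≤ 3*R^3 := by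
      intro c1 c2 u v hc1 hc1' hc2 hc2' hu hv
      rw [show -(c1*u^2 + c2*v^2) * u = -((c1*u^2 + c2*v^2) * u) by ring, abs_neg, abs_mul]
      have hu2 : u^2 ≤ R^2 := by nlinarith [neg_abs_le u, le_abs_self u]
      have hv2 : v^2 ≤ R^2 := by nlinarith [neg_abs_le v, le_abs_self v]
      have h0 : |c1*u^2 + c2*v^2| ≤ 3*R^2 := by
        rw [abs_of_nonneg (by positivity)]
        nlinarith [sq_nonneg v, sq_nonneg u]
      calc |c1*u^2 + c2*v^2| * |u| ≤ (3*R^2) * R := mul_le_mul h0 hu (abs_nonneg _) (by positivity)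
      _ = 3*R^3 := by ring
    have e1 : (G p).1 = -((1:ℝ)*(cl p.1)^2 + (1/4)*(cl p.2)^2) * cl p.1 := by
      simp only [hG]; ring
    have e2 : (G p).2 = -((5/4:ℝ)*(cl p.2)^2 + (1:ℝ)*(cl p.1)^2) * cl p.2 := by
      simp only [hG]; ring
    rw [Prod.norm_def]
    apply max_le
    · rw [Real.norm_eq_abs, e1]
      exact b1 1 (1/4) (cl p.1) (cl p.2) (by norm_num) (by norm_num) (by norm_num) (by norm_num) (hclabs _) (hclabs _)
    · rw [Real.norm_eq_abs, e2]
      exact b1 (5/4) 1 (cl p.2) (cl p.1) (by norm_num) (by norm_num) (by norm_num) (by norm_num) (hclabs _) (hclabs _)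
  -- Picard-Lindelöf on [0, n]
  have hex : ∀ n : ℕ, ∃ f : ℝ → ℝ × ℝ, f 0 = (a₀, b₀) ∧
      ∀ t ∈ Icc (0:ℝ) (n:ℝ), HasDerivWithinAt f (G (f t)) (Icc (0:ℝ) (n:ℝ)) t := by
    intro n
    have hpl : IsPicardLindelof (fun _ x => G x) (tmin := 0) (tmax := (n:ℝ))
        ⟨0, ⟨le_rfl, n.cast_nonneg⟩⟩ (a₀, b₀) ⟨3*R^3*n+1, by positivity⟩ 0 ⟨3*R^3, by positivity⟩ K := by
      refine ⟨fun t _ => hGlip.lipschitzOnWith,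
        fun x _ => continuousOn_const, fun t _ x _ => hGbound x, ?_⟩
      show 3*R^3 * max ((n:ℝ) - 0) (0 - 0) ≤ (3*R^3*n+1) - 0
      rw [sub_zero, sub_zero, max_eq_left n.cast_nonneg]
      linarith
    exact hpl.exists_eq_forall_mem_Icc_hasDerivWithinAt₀
  choose sol hsol0 hsolder using hex
  have hmem_nhds : ∀ (n : ℕ) (t : ℝ), 0 ≤ t → t < n → Icc (0:ℝ) (n:ℝ) ∈ nhdsWithin t (Ici t) := by
    intro n t ht htn
    rw [mem_nhdsWithin]
    exact ⟨Iio (n:ℝ), isOpen_Iio, htn, fun x hx => ⟨ht.trans hx.2, hx.1.le⟩⟩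
  have hagree : ∀ m n : ℕ, m ≤ n → EqOn (sol m) (sol n) (Icc 0 (m:ℝ)) := by
    intro m n hmn
    have hcast : (m:ℝ) ≤ (n:ℝ) := Nat.cast_le.mpr hmn
    apply ODE_solution_unique (v := fun _ x => G x) (K := K) (fun _ => hGlip)
    · exact fun t ht => (hsolder m t ht).continuousWithinAt
    · intro t ht
      exact (hsolder m t (Ico_subset_Icc_self ht)).mono_of_mem_nhdsWithin (hmem_nhds m t ht.1 ht.2)
    · exact fun t ht => ((hsolder n t (Icc_subset_Icc_right hcast ht)).continuousWithinAt).mono (Icc_subset_Icc_right hcast)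
    · intro t ht
      exact (hsolder n t ⟨ht.1, ht.2.le.trans hcast⟩).mono_of_mem_nhdsWithin
        (hmem_nhds n t ht.1 (lt_of_lt_of_le ht.2 hcast))
    · rw [hsol0, hsol0]
  set f : ℝ → ℝ × ℝ := fun t => sol ⌈t⌉₊ t with hfdef
  have hfagree : ∀ (n : ℕ), ∀ t ∈ Icc (0:ℝ) (n:ℝ), f t = sol n t := by
    intro n t ht
    exact hagree ⌈t⌉₊ n (Nat.ceil_le.mpr ht.2) ⟨ht.1, Nat.le_ceil t⟩
  have hf0 : f 0 = (a₀, b₀) := by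
    show sol ⌈(0:ℝ)⌉₊ 0 = (a₀, b₀)
    rw [Nat.ceil_zero, hsol0]
  have hfder : ∀ t ∈ Ici (0:ℝ), HasDerivWithinAt f (G (f t)) (Ici 0) t := by
    intro t ht
    set n := ⌈t⌉₊ + 1 with hn
    have htn : t < (n:ℝ) := by
      have := Nat.le_ceil t
      push_cast [hn]
      linarith
    have htIcc : t ∈ Icc (0:ℝ) (n:ℝ) := ⟨ht, htn.le⟩
    have h1 := (hsolder n t htIcc).congr (fun x hx => hfagree n x hx) (hfagree n t htIcc)
    rw [← hfagree n t htIcc] at h1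
    apply h1.mono_of_mem_nhdsWithin
    rw [mem_nhdsWithin]
    exact ⟨Iio (n:ℝ), isOpen_Iio, htn, fun x hx => ⟨hx.2, hx.1.le⟩⟩
  set A : ℝ → ℝ := fun t => (f t).1 with hA
  set B : ℝ → ℝ := fun t => (f t).2 with hB
  have hAder : ∀ t ∈ Ici (0:ℝ), HasDerivWithinAt A ((G (f t)).1) (Ici 0) t := fun t ht =>
    (ContinuousLinearMap.fst ℝ ℝ ℝ).hasFDerivAt.comp_hasDerivWithinAt t (hfder t ht)
  have hBder : ∀ t ∈ Ici (0:ℝ), HasDerivWithinAt B ((G (f t)).2) (Ici 0) t := fun t ht =>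
    (ContinuousLinearMap.snd ℝ ℝ ℝ).hasFDerivAt.comp_hasDerivWithinAt t (hfder t ht)
  have hG1 : ∀ t, (G (f t)).1 = -(cl (A t)^2 + (1/4) * cl (B t)^2) * cl (A t) := fun t => rfl
  have hG2 : ∀ t, (G (f t)).2 = -(cl (A t)^2 + (5/4) * cl (B t)^2) * cl (B t) := fun t => rfl
  -- energy estimate
  have hEder : ∀ t ∈ Ici (0:ℝ), HasDerivWithinAt (fun t => A t^2 + B t^2)
      (2 * A t ^ 1 * (G (f t)).1 + 2 * B t ^ 1 * (G (f t)).2) (Ici 0) t := by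
    intro t ht
    exact ((hAder t ht).pow 2).add ((hBder t ht).pow 2)
  have hEle : ∀ t ∈ Ici (0:ℝ), 2 * A t ^ 1 * (G (f t)).1 + 2 * B t ^ 1 * (G (f t)).2 ≤ 0 := by
    intro t ht
    rw [hG1, hG2]
    have h1 := hclmul (A t)
    have h2 := hclmul (B t)
    have h3 : (0:ℝ) ≤ cl (A t)^2 + (1/4) * cl (B t)^2 := by positivity
    have h4 : (0:ℝ) ≤ cl (A t)^2 + (5/4) * cl (B t)^2 := by positivity
    have e : 2 * A t ^ 1 * (-(cl (A t)^2 + (1/4) * cl (B t)^2) * cl (A t))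
        + 2 * B t ^ 1 * (-(cl (A t)^2 + (5/4) * cl (B t)^2) * cl (B t))
        = -(2 * (cl (A t)^2 + (1/4) * cl (B t)^2) * (A t * cl (A t))
            + 2 * (cl (A t)^2 + (5/4) * cl (B t)^2) * (B t * cl (B t))) := by ring
    rw [e, neg_nonpos]
    have := mul_nonneg h3 h1
    have := mul_nonneg h4 h2
    nlinarith
  have hanti : AntitoneOn (fun t => A t^2 + B t^2) (Ici 0) := aux_anti hEder hEle
  have hbound : ∀ t ∈ Ici (0:ℝ), |A t| ≤ R ∧ |B t| ≤ R := by
    intro t ht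
    have h0 : A 0 ^ 2 + B 0 ^ 2 = R^2 := by
      simp only [hA, hB, hf0]
      rw [hR2]
    have h1 : A t ^2 + B t ^2 ≤ R^2 := by
      have := hanti (self_mem_Ici) ht ht
      simp only at this
      linarith [this, h0.ge]
    constructor
    · rw [← Real.sqrt_sq_eq_abs, ← Real.sqrt_sq hR]
      exact Real.sqrt_le_sqrt (by nlinarith [sq_nonneg (B t)])
    · rw [← Real.sqrt_sq_eq_abs, ← Real.sqrt_sq hR]
      exact Real.sqrt_le_sqrt (by nlinarith [sq_nonneg (A t)])
  refine ⟨A, B, ?_, ?_, ?_⟩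
  · show (f 0).1 = a₀
    rw [hf0]
  · show (f 0).2 = b₀
    rw [hf0]
  · intro t ht
    obtain ⟨hba, hbb⟩ := hbound t ht
    constructor
    · have h := hAder t ht
      rw [hG1, hcleq _ hba, hcleq _ hbb] at h
      exact h
    · have h := hBder t ht
      rw [hG2, hcleq _ hba, hcleq _ hbb] at h
      exact h

/-- The ODE system `a' = −(a² + ¼b²)a`, `b' = −(a² + (5/4)b²)b`: for any initial data
there is a solution on all of `[0,∞)`, and every solution on `[0,∞)` converges to
`(0,0)` as `t → ∞`. -/
theorem stmt9 (a₀ b₀ : ℝ) :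
    (∃ a b : ℝ → ℝ, a 0 = a₀ ∧ b 0 = b₀ ∧
      ∀ t ∈ Ici (0 : ℝ),
        HasDerivWithinAt a (-((a t) ^ 2 + (1/4) * (b t) ^ 2) * a t) (Ici 0) t ∧
        HasDerivWithinAt b (-((a t) ^ 2 + (5/4) * (b t) ^ 2) * b t) (Ici 0) t) ∧
    (∀ a b : ℝ → ℝ, a 0 = a₀ → b 0 = b₀ →
      (∀ t ∈ Ici (0 : ℝ),
        HasDerivWithinAt a (-((a t) ^ 2 + (1/4) * (b t) ^ 2) * a t) (Ici 0) t ∧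
        HasDerivWithinAt b (-((a t) ^ 2 + (5/4) * (b t) ^ 2) * b t) (Ici 0) t) →
      Tendsto (fun t => (a t, b t)) atTop (nhds ((0 : ℝ), (0 : ℝ)))) := by
  exact ⟨part1 a₀ b₀, fun a b _ _ hab => part2 a b hab⟩
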